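/- Let c ∈ EuclideanSpace ℝ (Fin 2) and let v : ZMod 5 → EuclideanSpace ℝ (Fin 2) be an injective map such that all five points lie on a common circle centered at c (there is r with dist (v i) c = r for all i) and all five sides have the same length (there is d with dist (v i) (v (i + 1)) = d for all i). Then there exists an isometry ρ of the Euclidean plane (an isometric equivalence of EuclideanSpace ℝ (Fin 2) with itself) such that ρ c = c and ρ (v i) = v (i + 1) for every i ∈ ZMod 5. That is, an equilateral pentagon inscribed in a circle is a regular pentagon or a regular pentagram. -/

import Mathlib

/-- The isometry of `ℂ` given by rotation by a unit complex number `u` about the point `a`. -/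
noncomputable def rotFix (u a : ℂ) (hu : ‖u‖ = 1) : ℂ ≃ᵢ ℂ where
  toFun := fun z => u * (z - a) + a
  invFun := fun z => u⁻¹ * (z - a) + a
  left_inv := by
    intro z
    have hu0 : u ≠ 0 := by intro h; rw [h] at hu; simp at hu
    field_simp
    ring
  right_inv := by
    intro z
    have hu0 : u ≠ 0 := by intro h; rw [h] at hu; simp at hu
    field_simp
    ring
  isometry_toFun := Isometry.of_dist_eq fun z w => by
    simp only [Complex.dist_eq]
    have h : (u * (z - a) + a) - (u * (w - a) + a) = u * (z - w) := by ring
    rw [h, norm_mul, hu, one_mul]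

theorem rotFix_apply (u a : ℂ) (hu) (z : ℂ) : rotFix u a hu z = u * (z - a) + a := rfl

/-- Two unit complex numbers with equal real parts are equal or conjugate. -/
theorem unit_eq_or_conj {a b : ℂ} (ha : ‖a‖ = 1) (hb : ‖b‖ = 1)
    (hre : a.re = b.re) : b = a ∨ b = starRingEnd ℂ a := by
  have hna : Complex.normSq a = 1 := by rw [← Complex.sq_norm, ha]; norm_num
  have hnb : Complex.normSq b = 1 := by rw [← Complex.sq_norm, hb]; norm_num
  simp only [Complex.normSq_apply] at hna hnb
  have key : (b.im - a.im) * (b.im + a.im) = 0 := by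
    have : b.im * b.im = a.im * a.im := by rw [hre] at hna; linarith
    linear_combination this
  rcases mul_eq_zero.1 key with h | h
  · exact Or.inl (Complex.ext hre.symm (by linarith))
  · refine Or.inr (Complex.ext ?_ ?_)
    · simpa using hre.symm
    · simp only [Complex.conj_im]; linarith

theorem equilateral_pentagon_inscribed_in_circle_is_regular
    (c : EuclideanSpace ℝ (Fin 2)) (v : ZMod 5 → EuclideanSpace ℝ (Fin 2))
    (hinj : Function.Injective v)
    (hcirc : ∃ r : ℝ, ∀ i : ZMod 5, dist (v i) c = r)
    (hside : ∃ d : ℝ, ∀ i : ZMod 5, dist (v i) (v (i + 1)) = d) :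
    ∃ ρ : EuclideanSpace ℝ (Fin 2) ≃ᵢ EuclideanSpace ℝ (Fin 2),
      ρ c = c ∧ ∀ i : ZMod 5, ρ (v i) = v (i + 1) := by
  obtain ⟨r, hr⟩ := hcirc
  obtain ⟨d, hd⟩ := hside
  set e : EuclideanSpace ℝ (Fin 2) ≃ₗᵢ[ℝ] ℂ := Complex.orthonormalBasisOneI.repr.symm with he
  set z : ZMod 5 → ℂ := fun i => e (v i) - e c with hzdef
  have hz : ∀ i, ‖z i‖ = r := by
    intro i
    rw [hzdef]
    simp only [← Complex.dist_eq]
    rw [e.dist_map]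
    exact hr i
  -- r > 0
  have hr0 : 0 < r := by
    rcases lt_or_eq_of_le (dist_nonneg.trans_eq (hr 0)) with h | h
    · exact h
    · exfalso
      have h0 : v 0 = c := by
        have := hr 0; rw [← h] at this; exact dist_eq_zero.mp this
      have h1 : v 1 = c := by
        have := hr 1; rw [← h] at this; exact dist_eq_zero.mp this
      have : (0 : ZMod 5) = 1 := hinj (h0.trans h1.symm)
      exact absurd this (by decide)
  have hzne : ∀ i, z i ≠ 0 := by
    intro i h
    have := hz i
    rw [h] at this
    simp at this
    exact hr0.ne this
  have hzd : ∀ i, ‖z (i + 1) - z i‖ = d := by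
    intro i
    have : z (i + 1) - z i = e (v (i + 1)) - e (v i) := by rw [hzdef]; ring
    rw [this, ← Complex.dist_eq, e.dist_map, dist_comm]
    exact hd i
  set w : ZMod 5 → ℂ := fun i => z (i + 1) / z i with hwdef
  have hw1 : ∀ i, ‖w i‖ = 1 := by
    intro i
    rw [hwdef]
    simp only [norm_div, hz]
    exact div_self hr0.ne'
  have hzstep : ∀ i, z (i + 1) = w i * z i := by
    intro i
    rw [hwdef]
    exact (div_mul_cancel₀ _ (hzne i)).symm
  have hwre : ∀ i, (w i).re = 1 - (d / r) ^ 2 / 2 := by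
    intro i
    have h1 : Complex.normSq (w i) = 1 := by
      rw [← Complex.sq_norm, hw1 i]; norm_num
    have h2 : Complex.normSq (w i - 1) = (d / r) ^ 2 := by
      rw [← Complex.sq_norm]
      congr 1
      have : w i - 1 = (z (i + 1) - z i) / z i := by
        show z (i + 1) / z i - 1 = (z (i + 1) - z i) / z i
        exact div_sub_one (hzne i)
      rw [this, norm_div, hzd, hz]
    simp only [Complex.normSq_apply, Complex.sub_re, Complex.sub_im, Complex.one_re,
      Complex.one_im] at h1 h2 ⊢
    nlinarith [h1, h2]
  -- consecutive ratios are equal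
  have hconst : ∀ i, w (i + 1) = w i := by
    intro i
    rcases unit_eq_or_conj (hw1 i) (hw1 (i + 1))
        ((hwre i).trans (hwre (i + 1)).symm) with h | h
    · exact h
    · exfalso
      have hmul : w (i + 1) * w i = 1 := by
        have hns : Complex.normSq (w i) = 1 := by
          rw [← Complex.sq_norm, hw1 i]; norm_num
        rw [h, ← Complex.normSq_eq_conj_mul_self, hns, Complex.ofReal_one]
      have hz2 : z (i + 1 + 1) = z i := by
        rw [hzstep, hzstep, ← mul_assoc, hmul, one_mul]
      have hv : v (i + 1 + 1) = v i := by
        have : e (v (i + 1 + 1)) = e (v i) := by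
          have := hz2
          rw [hzdef] at this
          simpa using this
        exact e.injective this
      have : i + 1 + 1 = i := hinj hv
      have h2 : (2 : ZMod 5) = 0 := by
        have := this
        rwa [add_assoc, ← sub_eq_zero, add_sub_cancel_left] at this
      exact absurd h2 (by decide)
  have hall : ∀ i, w i = w 0 := by
    intro i
    have key : ∀ n : ℕ, w (n : ZMod 5) = w 0 := by
      intro n
      induction n with
      | zero => simp
      | succ k ih =>
        have : ((k + 1 : ℕ) : ZMod 5) = (k : ZMod 5) + 1 := by push_cast; ring
        rw [this, hconst, ih]
    have : ((i.val : ℕ) : ZMod 5) = i := ZMod.natCast_zmod_val i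
    rw [← this]
    exact key i.val
  refine ⟨(e.toIsometryEquiv).trans ((rotFix (w 0) (e c) (hw1 0)).trans
      e.symm.toIsometryEquiv), ?_, ?_⟩
  · simp [rotFix_apply]
  · intro i
    simp only [IsometryEquiv.trans_apply, LinearIsometryEquiv.coe_toIsometryEquiv,
      rotFix_apply]
    have : (w 0) * (e (v i) - e c) + e c = e (v (i + 1)) := by
      have h1 : e (v i) - e c = z i := by rw [hzdef]
      have h2 : e (v (i + 1)) - e c = z (i + 1) := by rw [hzdef]
      rw [h1, ← hall i, ← hzstep, ← h2]
      ring
    rw [this]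
    simp
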